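/- arXiv:1201.3543 — 2 statements merged into one kernel-verified Lean document; each statement's English description precedes it below -/
import Mathlib

section
/- A mapping G(f,S) = Σ_{R⊆N, R∩S≠∅} q_R^S a(R), where a is the Möbius transform of f, can be written in the form G(f,S) = Σ_{T⊆N∖S} p_T^S (f(T∪S) − f(T)) for some real coefficients p_T^S if and only if the coefficients q_R^S depend only on S and R∖S (i.e., q_R^S = q_{(R∖S)∪S}^S for all R with R∩S≠∅); in that case q_R^S = Σ_{R∖S ⊆ T ⊆ N∖S} p_T^S and p_T^S = Σ_{T ⊆ R ⊆ N∖S} (−1)^{|R|−|T|} q_{R∪S}^S. -/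
open Finset

noncomputable def moebius {n : ℕ} (f : Finset (Fin n) → ℝ) (R : Finset (Fin n)) : ℝ :=
  ∑ T ∈ R.powerset, (-1 : ℝ) ^ (R.card - T.card) * f T

noncomputable def Gmap {n : ℕ} (q : Finset (Fin n) → ℝ) (S : Finset (Fin n))
    (f : Finset (Fin n) → ℝ) : ℝ :=
  ∑ R ∈ (univ : Finset (Finset (Fin n))).filter (fun R => (R ∩ S).Nonempty),
    q R * moebius f R

lemma powerset_eq_filter {n : ℕ} (R : Finset (Fin n)) :
    R.powerset = (univ : Finset (Finset (Fin n))).filter (fun T => T ⊆ R) := by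
  ext T; simp

lemma coeff_ext {n : ℕ} (c d : Finset (Fin n) → ℝ)
    (h : ∀ f : Finset (Fin n) → ℝ,
      ∑ U ∈ (univ : Finset (Finset (Fin n))), c U * f U
        = ∑ U ∈ (univ : Finset (Finset (Fin n))), d U * f U) :
    ∀ U, c U = d U := by
  intro U
  have := h (fun T => if T = U then 1 else 0)
  simpa using this

lemma gmap_expand {n : ℕ} (q : Finset (Fin n) → ℝ) (S : Finset (Fin n))
    (f : Finset (Fin n) → ℝ) :
    Gmap q S f = ∑ U ∈ (univ : Finset (Finset (Fin n))),
      (∑ R ∈ (univ : Finset (Finset (Fin n))).filter (fun R => U ⊆ R),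
        (-1:ℝ)^(R.card - U.card) * (if (R ∩ S).Nonempty then q R else 0)) * f U := by
  have step1 : Gmap q S f = ∑ R ∈ (univ : Finset (Finset (Fin n))),
      ∑ T ∈ (univ : Finset (Finset (Fin n))),
        (if T ⊆ R then (-1:ℝ)^(R.card - T.card) * (if (R ∩ S).Nonempty then q R else 0) * f T
          else 0) := by
    unfold Gmap moebius
    rw [Finset.sum_filter]
    refine Finset.sum_congr rfl fun R _ => ?_
    rw [powerset_eq_filter, Finset.sum_filter]
    by_cases h1 : (R ∩ S).Nonempty
    · simp only [h1, if_true, Finset.mul_sum]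
      refine Finset.sum_congr rfl fun T _ => ?_
      by_cases h2 : T ⊆ R <;> simp [h2] <;> try ring
    · rw [if_neg h1, eq_comm]
      apply Finset.sum_eq_zero
      intro T _
      by_cases h2 : T ⊆ R <;> simp [h1, h2]
  rw [step1, Finset.sum_comm]
  refine Finset.sum_congr rfl fun U _ => ?_
  rw [Finset.sum_mul, Finset.sum_filter]

lemma rhs_expand {n : ℕ} (S : Finset (Fin n)) (pc : Finset (Fin n) → ℝ)
    (f : Finset (Fin n) → ℝ) :
    ∑ T ∈ ((univ : Finset (Fin n)) \ S).powerset, pc T * (f (T ∪ S) - f T)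
      = ∑ U ∈ (univ : Finset (Finset (Fin n))),
        ((if S ⊆ U then pc (U \ S) else 0) - (if U ∩ S = ∅ then pc U else 0)) * f U := by
  simp_rw [mul_sub, sub_mul, Finset.sum_sub_distrib]
  congr 1
  · rw [show ∑ U ∈ (univ : Finset (Finset (Fin n))), (if S ⊆ U then pc (U \ S) else 0) * f U
        = ∑ U ∈ (univ : Finset (Finset (Fin n))).filter (fun U => S ⊆ U), pc (U \ S) * f U by
      rw [Finset.sum_filter]
      exact Finset.sum_congr rfl fun U _ => by by_cases h : S ⊆ U <;> simp [h]]
    refine Finset.sum_nbij' (fun T => T ∪ S) (fun U => U \ S) ?_ ?_ ?_ ?_ ?_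
    · intro T hT
      simp only [mem_powerset] at hT
      simp [mem_filter]
    · intro U hU
      simp only [mem_filter] at hU
      simp only [mem_powerset]
      exact sdiff_subset_sdiff (subset_univ U) (Finset.Subset.refl S)
    · intro T hT
      simp only [mem_powerset] at hT
      have hd : Disjoint T S := (subset_sdiff.mp hT).2
      exact union_sdiff_cancel_right hd
    · intro U hU
      simp only [mem_filter] at hU
      exact sdiff_union_of_subset hU.2
    · intro T hT
      simp only [mem_powerset] at hT
      have hd : Disjoint T S := (subset_sdiff.mp hT).2
      rw [union_sdiff_cancel_right hd]
  · rw [eq_comm]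
    simp_rw [ite_mul, zero_mul]
    rw [← Finset.sum_filter]
    rw [show (univ : Finset (Finset (Fin n))).filter (fun U => U ∩ S = ∅)
        = ((univ : Finset (Fin n)) \ S).powerset by
      ext U
      simp [subset_sdiff, disjoint_iff_inter_eq_empty]]

lemma negpow_sub {w d : ℕ} (h : w ≤ d) : ((-1 : ℝ)) ^ (d - w) = (-1)^d * (-1)^w := by
  obtain ⟨k, rfl⟩ := Nat.le.dest h
  rw [Nat.add_sub_cancel_left, pow_add, mul_right_comm, ← pow_add, show w + w = 2*w by ring, pow_mul]
  norm_num

lemma interval_sum {n : ℕ} (A B : Finset (Fin n)) (hAB : A ⊆ B) (F : Finset (Fin n) → ℝ) :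
    ∑ T ∈ B.powerset.filter (fun T => A ⊆ T), F T = ∑ W ∈ (B \ A).powerset, F (A ∪ W) := by
  refine Finset.sum_nbij' (fun T => T \ A) (fun W => A ∪ W) ?_ ?_ ?_ ?_ ?_
  · intro T hT
    simp only [mem_filter, mem_powerset] at hT ⊢
    exact sdiff_subset_sdiff hT.1 (Finset.Subset.refl A)
  · intro W hW
    simp only [mem_powerset] at hW
    simp only [mem_filter, mem_powerset]
    exact ⟨union_subset hAB (hW.trans sdiff_subset), subset_union_left⟩
  · intro T hT
    simp only [mem_filter, mem_powerset] at hT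
    exact union_sdiff_of_subset hT.2
  · intro W hW
    simp only [mem_powerset] at hW
    exact union_sdiff_cancel_left (sdiff_disjoint.mono_left hW).symm
  · intro T hT
    simp only [mem_filter, mem_powerset] at hT
    rw [union_sdiff_of_subset hT.2]

lemma alt_interval₁ {n : ℕ} (A B : Finset (Fin n)) (hAB : A ⊆ B) :
    ∑ T ∈ B.powerset.filter (fun T => A ⊆ T), (-1:ℝ)^(T.card - A.card)
      = if B = A then 1 else 0 := by
  rw [interval_sum A B hAB]
  have h1 : ∀ W ∈ (B \ A).powerset, ((-1:ℝ))^((A ∪ W).card - A.card) = (-1)^W.card := by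
    intro W hW
    simp only [mem_powerset] at hW
    rw [card_union_of_disjoint (disjoint_sdiff.mono_right hW), Nat.add_sub_cancel_left]
  rw [Finset.sum_congr rfl h1]
  have h2 : ∑ W ∈ (B \ A).powerset, ((-1:ℝ))^W.card
      = ((∑ W ∈ (B \ A).powerset, ((-1:ℤ))^W.card : ℤ) : ℝ) := by push_cast; rfl
  rw [h2, Finset.sum_powerset_neg_one_pow_card]
  by_cases h : B = A
  · simp [h]
  · have : ¬ (B \ A = ∅) := by
      rw [sdiff_eq_empty_iff_subset]
      exact fun hBA => h (Finset.Subset.antisymm hBA hAB)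
    simp [h, this]

lemma alt_interval₂ {n : ℕ} (A B : Finset (Fin n)) (hAB : A ⊆ B) :
    ∑ T ∈ B.powerset.filter (fun T => A ⊆ T), (-1:ℝ)^(B.card - T.card)
      = if B = A then 1 else 0 := by
  have h1 : ∀ T ∈ B.powerset.filter (fun T => A ⊆ T),
      ((-1:ℝ))^(B.card - T.card) = ((-1)^B.card * (-1)^A.card) * (-1)^(T.card - A.card) := by
    intro T hT
    simp only [mem_filter, mem_powerset] at hT
    rw [negpow_sub (card_le_card hT.1), negpow_sub (card_le_card hT.2),
      mul_mul_mul_comm, ← pow_add (-1:ℝ) A.card, show A.card + A.card = 2*A.card by ring,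
      pow_mul]
    norm_num
  rw [Finset.sum_congr rfl h1, ← Finset.mul_sum, alt_interval₁ A B hAB]
  by_cases h : B = A
  · subst h
    rw [← pow_add, show B.card + B.card = 2*B.card by ring, pow_mul]
    norm_num
  · simp [h]

lemma inv_alt_of_upper {n : ℕ} (M : Finset (Fin n)) (g : Finset (Fin n) → ℝ)
    (T : Finset (Fin n)) (hT : T ⊆ M) :
    ∑ A ∈ M.powerset.filter (fun A => T ⊆ A),
      (-1:ℝ)^(A.card - T.card) * (∑ B ∈ M.powerset.filter (fun B => A ⊆ B), g B) = g T := by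
  simp_rw [Finset.mul_sum]
  rw [Finset.sum_comm' (s' := fun B => B.powerset.filter (fun A => T ⊆ A))
    (t' := M.powerset.filter (fun B => T ⊆ B))
    (h := by
      intro A B
      simp only [mem_filter, mem_powerset]
      constructor
      · rintro ⟨⟨h1, h2⟩, h3, h4⟩
        exact ⟨⟨h4, h2⟩, h3, h2.trans h4⟩
      · rintro ⟨⟨h1, h2⟩, h3, h4⟩
        exact ⟨⟨h1.trans h3, h2⟩, h3, h1⟩)]
  have h2 : ∀ B ∈ M.powerset.filter (fun B => T ⊆ B),
      (∑ A ∈ B.powerset.filter (fun A => T ⊆ A), (-1:ℝ)^(A.card - T.card) * g B)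
        = (if B = T then 1 else 0) * g B := by
    intro B hB
    simp only [mem_filter, mem_powerset] at hB
    rw [← Finset.sum_mul, alt_interval₁ T B hB.2]
  rw [Finset.sum_congr rfl h2]
  rw [Finset.sum_eq_single_of_mem T (by simp [mem_filter, mem_powerset, hT])]
  · simp
  · intro B hB hne
    simp [hne]

lemma inv_upper_of_alt {n : ℕ} (M : Finset (Fin n)) (g : Finset (Fin n) → ℝ)
    (A : Finset (Fin n)) (hA : A ⊆ M) :
    ∑ T ∈ M.powerset.filter (fun T => A ⊆ T),
      (∑ B ∈ M.powerset.filter (fun B => T ⊆ B), (-1:ℝ)^(B.card - T.card) * g B) = g A := by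
  rw [Finset.sum_comm' (s' := fun B => B.powerset.filter (fun T => A ⊆ T))
    (t' := M.powerset.filter (fun B => A ⊆ B))
    (h := by
      intro T B
      simp only [mem_filter, mem_powerset]
      constructor
      · rintro ⟨⟨h1, h2⟩, h3, h4⟩
        exact ⟨⟨h4, h2⟩, h3, h2.trans h4⟩
      · rintro ⟨⟨h1, h2⟩, h3, h4⟩
        exact ⟨⟨h1.trans h3, h2⟩, h3, h1⟩)]
  have h2 : ∀ B ∈ M.powerset.filter (fun B => A ⊆ B),
      (∑ T ∈ B.powerset.filter (fun T => A ⊆ T), (-1:ℝ)^(B.card - T.card) * g B)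
        = (if B = A then 1 else 0) * g B := by
    intro B hB
    simp only [mem_filter, mem_powerset] at hB
    rw [← Finset.sum_mul, alt_interval₂ A B hB.2]
  rw [Finset.sum_congr rfl h2]
  rw [Finset.sum_eq_single_of_mem A (by simp [mem_filter, mem_powerset, hA])]
  · simp
  · intro B hB hne
    simp [hne]

lemma dp_sum {n : ℕ} (S : Finset (Fin n)) (pc : Finset (Fin n) → ℝ) (R : Finset (Fin n)) :
    ∑ U ∈ (univ : Finset (Finset (Fin n))).filter (fun U => R ⊆ U),
      ((if S ⊆ U then pc (U \ S) else 0) - (if U ∩ S = ∅ then pc U else 0))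
    = (∑ T ∈ ((univ : Finset (Fin n)) \ S).powerset.filter (fun T => R \ S ⊆ T), pc T)
      - ∑ T ∈ ((univ : Finset (Fin n)) \ S).powerset.filter (fun T => R ⊆ T), pc T := by
  rw [Finset.sum_sub_distrib]
  congr 1
  · rw [← Finset.sum_filter, Finset.filter_filter]
    refine Finset.sum_nbij' (fun U => U \ S) (fun T => T ∪ S) ?_ ?_ ?_ ?_ ?_
    · intro U hU
      simp only [mem_filter, mem_powerset, mem_univ, true_and] at hU ⊢
      exact ⟨sdiff_subset_sdiff (subset_univ U) (Finset.Subset.refl S),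
        sdiff_subset_sdiff hU.1 (Finset.Subset.refl S)⟩
    · intro T hT
      simp only [mem_filter, mem_powerset, mem_univ, true_and] at hT ⊢
      constructor
      · intro x hx
        by_cases hxS : x ∈ S
        · exact mem_union_right _ hxS
        · exact mem_union_left _ (hT.2 (mem_sdiff.mpr ⟨hx, hxS⟩))
      · exact subset_union_right
    · intro U hU
      simp only [mem_filter, mem_univ, true_and] at hU
      exact sdiff_union_of_subset hU.2
    · intro T hT
      simp only [mem_filter, mem_powerset] at hT
      exact union_sdiff_cancel_right (subset_sdiff.mp hT.1).2
    · intro U hU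
      rfl
  · rw [← Finset.sum_filter, Finset.filter_filter]
    rw [show (univ : Finset (Finset (Fin n))).filter (fun U => R ⊆ U ∧ U ∩ S = ∅)
        = ((univ : Finset (Fin n)) \ S).powerset.filter (fun T => R ⊆ T) by
      ext U
      simp only [mem_filter, mem_powerset, mem_univ, true_and, subset_sdiff,
        disjoint_iff_inter_eq_empty, subset_univ]
      tauto]

lemma key_equiv {n : ℕ} (S : Finset (Fin n)) (q pc : Finset (Fin n) → ℝ) :
    (∀ f : Finset (Fin n) → ℝ,
        Gmap q S f = ∑ T ∈ ((univ : Finset (Fin n)) \ S).powerset, pc T * (f (T ∪ S) - f T))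
      ↔ ∀ R : Finset (Fin n), (if (R ∩ S).Nonempty then q R else 0)
          = (∑ T ∈ ((univ : Finset (Fin n)) \ S).powerset.filter (fun T => R \ S ⊆ T), pc T)
            - ∑ T ∈ ((univ : Finset (Fin n)) \ S).powerset.filter (fun T => R ⊆ T), pc T := by
  constructor
  · intro h R
    have hcd := coeff_ext
      (fun U => (∑ R ∈ (univ : Finset (Finset (Fin n))).filter (fun R => U ⊆ R),
        (-1:ℝ)^(R.card - U.card) * (if (R ∩ S).Nonempty then q R else 0)))
      (fun U => ((if S ⊆ U then pc (U \ S) else 0) - (if U ∩ S = ∅ then pc U else 0)))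
      (fun f => by rw [← gmap_expand, ← rhs_expand]; exact h f)
    have h6 := inv_upper_of_alt (univ : Finset (Fin n))
      (fun R => if (R ∩ S).Nonempty then q R else 0) R (subset_univ R)
    rw [Finset.powerset_univ] at h6
    beta_reduce at h6
    rw [← h6, Finset.sum_congr rfl (fun U hU => hcd U), dp_sum]
  · intro h f
    rw [gmap_expand q S f, rhs_expand S pc f]
    refine Finset.sum_congr rfl fun U _ => ?_
    congr 1
    have hq : ∀ R : Finset (Fin n), (if (R ∩ S).Nonempty then q R else 0)
        = ∑ U' ∈ (univ : Finset (Finset (Fin n))).filter (fun U' => R ⊆ U'),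
            ((if S ⊆ U' then pc (U' \ S) else 0) - (if U' ∩ S = ∅ then pc U' else 0)) :=
      fun R => by rw [h R]; exact (dp_sum S pc R).symm
    have h5 := inv_alt_of_upper (univ : Finset (Fin n))
      (fun U => (if S ⊆ U then pc (U \ S) else 0) - (if U ∩ S = ∅ then pc U else 0))
      U (subset_univ U)
    rw [Finset.powerset_univ] at h5
    beta_reduce at h5
    rw [← h5]
    exact Finset.sum_congr rfl fun R _ => by rw [hq R]

lemma filter_empty_of_inter {n : ℕ} (S R : Finset (Fin n)) (hR : (R ∩ S).Nonempty) :
    ((univ : Finset (Fin n)) \ S).powerset.filter (fun T => R ⊆ T) = ∅ := by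
  rw [Finset.filter_eq_empty_iff]
  intro T hT hRT
  obtain ⟨x, hx⟩ := hR
  rw [mem_inter] at hx
  have := (mem_powerset.mp hT) (hRT hx.1)
  rw [mem_sdiff] at this
  exact this.2 hx.2

lemma formula_q {n : ℕ} (S : Finset (Fin n)) (q pc : Finset (Fin n) → ℝ)
    (h : ∀ f : Finset (Fin n) → ℝ,
      Gmap q S f = ∑ T ∈ ((univ : Finset (Fin n)) \ S).powerset, pc T * (f (T ∪ S) - f T))
    (R : Finset (Fin n)) (hR : (R ∩ S).Nonempty) :
    q R = ∑ T ∈ ((univ : Finset (Fin n)) \ S).powerset.filter (fun T => R \ S ⊆ T), pc T := by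
  have := (key_equiv S q pc).mp h R
  rwa [if_pos hR, filter_empty_of_inter S R hR, Finset.sum_empty, sub_zero] at this

/-- `G(·,S)` has the generalized-value form
`Σ_{T⊆N∖S} p_T^S (f(T∪S) − f(T))` iff the coefficients `q_R^S` depend only on `S` and
`R∖S`; and then `q_R^S = Σ_{R∖S⊆T⊆N∖S} p_T^S` and
`p_T^S = Σ_{T⊆R⊆N∖S} (−1)^{|R|−|T|} q_{R∪S}^S`. -/
theorem generalized_value_characterization (n : ℕ) (S : Finset (Fin n)) (hS : S.Nonempty)
    (q : Finset (Fin n) → ℝ) :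
    ((∃ pc : Finset (Fin n) → ℝ, ∀ f : Finset (Fin n) → ℝ,
        Gmap q S f = ∑ T ∈ (univ \ S).powerset, pc T * (f (T ∪ S) - f T))
      ↔ (∀ R : Finset (Fin n), (R ∩ S).Nonempty → q R = q ((R \ S) ∪ S)))
    ∧ (∀ pc : Finset (Fin n) → ℝ,
        (∀ f : Finset (Fin n) → ℝ,
          Gmap q S f = ∑ T ∈ (univ \ S).powerset, pc T * (f (T ∪ S) - f T)) →
        (∀ R : Finset (Fin n), (R ∩ S).Nonempty →
            q R = ∑ T ∈ ((univ \ S).powerset.filter (fun T => R \ S ⊆ T)), pc T)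
        ∧ (∀ T ∈ (univ \ S).powerset,
            pc T = ∑ R ∈ ((univ \ S).powerset.filter (fun R => T ⊆ R)),
              (-1 : ℝ) ^ (R.card - T.card) * q (R ∪ S))) := by
  constructor
  · constructor
    · rintro ⟨pc, h⟩ R hR
      have hR' : ((((R \ S) ∪ S)) ∩ S).Nonempty := by
        obtain ⟨x, hx⟩ := hS
        exact ⟨x, mem_inter.mpr ⟨mem_union_right _ hx, hx⟩⟩
      have hRS : ((R \ S) ∪ S) \ S = R \ S := union_sdiff_cancel_right sdiff_disjoint
      rw [formula_q S q pc h R hR, formula_q S q pc h _ hR']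
      simp only [hRS]
    · intro H
      refine ⟨fun T => ∑ B ∈ ((univ : Finset (Fin n)) \ S).powerset.filter (fun B => T ⊆ B),
        (-1:ℝ)^(B.card - T.card) * q (B ∪ S), ?_⟩
      apply (key_equiv S q _).mpr
      intro R
      by_cases hR : (R ∩ S).Nonempty
      · rw [if_pos hR, filter_empty_of_inter S R hR, Finset.sum_empty, sub_zero]
        rw [inv_upper_of_alt ((univ : Finset (Fin n)) \ S) (fun B => q (B ∪ S)) (R \ S)
          (sdiff_subset_sdiff (subset_univ R) (Finset.Subset.refl S))]
        exact H R hR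
      · rw [if_neg hR]
        have hRS : R \ S = R := sdiff_eq_self_iff_disjoint.mpr
          (disjoint_iff_inter_eq_empty.mpr (not_nonempty_iff_eq_empty.mp hR))
        rw [hRS, sub_self]
  · intro pc h
    refine ⟨fun R hR => formula_q S q pc h R hR, ?_⟩
    intro T hT
    rw [mem_powerset] at hT
    have hq : ∀ A ∈ ((univ : Finset (Fin n)) \ S).powerset.filter (fun A => T ⊆ A),
        q (A ∪ S) = ∑ B ∈ ((univ : Finset (Fin n)) \ S).powerset.filter (fun B => A ⊆ B),
          pc B := by
      intro A hA
      simp only [mem_filter, mem_powerset] at hA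
      have hA1 : ((A ∪ S) ∩ S).Nonempty := by
        obtain ⟨x, hx⟩ := hS
        exact ⟨x, mem_inter.mpr ⟨mem_union_right _ hx, hx⟩⟩
      have hf := formula_q S q pc h (A ∪ S) hA1
      rwa [union_sdiff_cancel_right (subset_sdiff.mp hA.1).2] at hf
    have h5 := inv_alt_of_upper ((univ : Finset (Fin n)) \ S) pc T hT
    rw [← h5]
    refine Finset.sum_congr rfl fun A hA => ?_
    rw [hq A hA]
end

section
/- For every pseudo-Boolean function f, every p ∈ (0,1)^n, and every S ⊆ N, Φ_{B,p}(f,S) = ⟨f, g_{S,p}⟩, where g_{S,p}(x) = Π_{i∈S}(x_i/p_i) − Π_{i∈S}((1−x_i)/(1−p_i)) and ⟨f,g⟩ = Σ_{x∈{0,1}^n} w(x)f(x)g(x) with w(x) = Π_{i∈N} p_i^{x_i}(1−p_i)^{1−x_i}. -/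
open Finset

/-- The weighted Banzhaf influence index (generalized-value form). -/
noncomputable def wBanzhafInfluence {n : ℕ} (p : Fin n → ℝ) (f : Finset (Fin n) → ℝ)
    (S : Finset (Fin n)) : ℝ :=
  ∑ T ∈ (univ \ S).powerset,
    ((∏ i ∈ T, p i) * ∏ i ∈ univ \ (S ∪ T), (1 - p i)) * (f (T ∪ S) - f T)

/-- `Φ_{B,p}(f,S) = ⟨f, g_{S,p}⟩`, where
`g_{S,p}(x) = Π_{i∈S}(x_i/p_i) − Π_{i∈S}((1−x_i)/(1−p_i))` and
`⟨f,g⟩ = Σ_x w(x) f(x) g(x)` with `w(x) = Π_i p_i^{x_i}(1−p_i)^{1−x_i}`. -/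
theorem wBanzhafInfluence_eq_inner (n : ℕ) (p : Fin n → ℝ)
    (hp : ∀ i, p i ∈ Set.Ioo (0 : ℝ) 1) (f : Finset (Fin n) → ℝ) (S : Finset (Fin n)) :
    wBanzhafInfluence p f S
      = ∑ X : Finset (Fin n),
          ((∏ i ∈ X, p i) * ∏ i ∈ univ \ X, (1 - p i)) * (f X *
            ((∏ i ∈ S, (if i ∈ X then (1 : ℝ) else 0) / p i)
              - ∏ i ∈ S, (1 - (if i ∈ X then (1 : ℝ) else 0)) / (1 - p i))) := by
  have hp0 : ∀ i, p i ≠ 0 := fun i => ne_of_gt (hp i).1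
  have hp1 : ∀ i, (1 : ℝ) - p i ≠ 0 := fun i => sub_ne_zero.mpr (ne_of_gt (hp i).2)
  have expand : ∀ X : Finset (Fin n),
      ((∏ i ∈ X, p i) * ∏ i ∈ univ \ X, (1 - p i)) * (f X *
        ((∏ i ∈ S, (if i ∈ X then (1 : ℝ) else 0) / p i)
          - ∏ i ∈ S, (1 - (if i ∈ X then (1 : ℝ) else 0)) / (1 - p i)))
      = (((∏ i ∈ X, p i) * ∏ i ∈ univ \ X, (1 - p i)) *
          (∏ i ∈ S, (if i ∈ X then (1 : ℝ) else 0) / p i)) * f X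
        - (((∏ i ∈ X, p i) * ∏ i ∈ univ \ X, (1 - p i)) *
          (∏ i ∈ S, (1 - (if i ∈ X then (1 : ℝ) else 0)) / (1 - p i))) * f X := by
    intro X; ring
  rw [Finset.sum_congr rfl (fun X _ => expand X), Finset.sum_sub_distrib]
  unfold wBanzhafInfluence
  have lhs_split :
      ∑ T ∈ (univ \ S).powerset,
        ((∏ i ∈ T, p i) * ∏ i ∈ univ \ (S ∪ T), (1 - p i)) * (f (T ∪ S) - f T)
      = (∑ T ∈ (univ \ S).powerset,
          ((∏ i ∈ T, p i) * ∏ i ∈ univ \ (S ∪ T), (1 - p i)) * f (T ∪ S))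
        - ∑ T ∈ (univ \ S).powerset,
          ((∏ i ∈ T, p i) * ∏ i ∈ univ \ (S ∪ T), (1 - p i)) * f T := by
    rw [← Finset.sum_sub_distrib]
    exact Finset.sum_congr rfl (fun T _ => by ring)
  rw [lhs_split]
  congr 1
  · -- first sum: only X ⊇ S survive
    rw [show (∑ X : Finset (Fin n),
        (((∏ i ∈ X, p i) * ∏ i ∈ univ \ X, (1 - p i)) *
          (∏ i ∈ S, (if i ∈ X then (1 : ℝ) else 0) / p i)) * f X)
      = ∑ X ∈ univ.filter (fun X => S ⊆ X),
        (((∏ i ∈ X, p i) * ∏ i ∈ univ \ X, (1 - p i)) *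
          (∏ i ∈ S, (if i ∈ X then (1 : ℝ) else 0) / p i)) * f X from
      (Finset.sum_filter_of_ne (by
        intro X _ hne
        by_contra hS
        apply hne
        obtain ⟨j, hjS, hjX⟩ := not_subset.mp hS
        have : (∏ i ∈ S, (if i ∈ X then (1 : ℝ) else 0) / p i) = 0 :=
          Finset.prod_eq_zero hjS (by simp [hjX])
        simp [this])).symm]
    refine (Finset.sum_bij' (fun X _ => X \ S) (fun T _ => T ∪ S) ?_ ?_ ?_ ?_ ?_).symm
    · intro X hX
      simp only [mem_filter, mem_univ, true_and] at hX
      simp only [mem_powerset]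
      intro i hi
      simp only [mem_sdiff] at hi ⊢
      exact ⟨mem_univ i, hi.2⟩
    · intro T hT
      simp only [mem_filter, mem_univ, true_and]
      exact subset_union_right
    · intro X hX
      simp only [mem_filter, mem_univ, true_and] at hX
      exact sdiff_union_of_subset hX
    · intro T hT
      simp only [mem_powerset] at hT
      have hdisj : Disjoint T S := by
        rw [disjoint_left]; intro a ha haS
        exact (mem_sdiff.mp (hT ha)).2 haS
      exact union_sdiff_cancel_right hdisj
    · intro X hX
      simp only [mem_filter, mem_univ, true_and] at hX
      have hprod1 : (∏ i ∈ S, (if i ∈ X then (1 : ℝ) else 0) / p i)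
          = (∏ i ∈ S, p i)⁻¹ := by
        rw [← Finset.prod_inv_distrib]
        exact Finset.prod_congr rfl (fun i hi => by
          simp [hX hi, one_div])
      have hU : S ∪ X \ S = X := union_sdiff_of_subset hX
      have hU2 : X \ S ∪ S = X := sdiff_union_of_subset hX
      have hprodX : (∏ i ∈ X \ S, p i) * ∏ i ∈ S, p i = ∏ i ∈ X, p i :=
        Finset.prod_sdiff hX
      simp only [hU, hU2, hprod1]
      rw [← hprodX]
      have hne : (∏ i ∈ S, p i) ≠ 0 := Finset.prod_ne_zero_iff.mpr (fun i _ => hp0 i)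
      field_simp
  · -- second sum: only X disjoint from S survive
    rw [show (∑ X : Finset (Fin n),
        (((∏ i ∈ X, p i) * ∏ i ∈ univ \ X, (1 - p i)) *
          (∏ i ∈ S, (1 - (if i ∈ X then (1 : ℝ) else 0)) / (1 - p i))) * f X)
      = ∑ X ∈ (univ \ S).powerset,
        (((∏ i ∈ X, p i) * ∏ i ∈ univ \ X, (1 - p i)) *
          (∏ i ∈ S, (1 - (if i ∈ X then (1 : ℝ) else 0)) / (1 - p i))) * f X from
      (Finset.sum_subset (Finset.subset_univ _) (by
        intro X _ hX
        simp only [mem_powerset] at hX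
        obtain ⟨j, hjX, hjS⟩ := not_subset.mp hX
        have hjS' : j ∈ S := by
          by_contra h
          exact hjS (mem_sdiff.mpr ⟨mem_univ j, h⟩)
        have : (∏ i ∈ S, (1 - (if i ∈ X then (1 : ℝ) else 0)) / (1 - p i)) = 0 :=
          Finset.prod_eq_zero hjS' (by simp [hjX])
        simp [this])).symm]
    refine Finset.sum_congr rfl (fun X hX => ?_)
    simp only [mem_powerset] at hX
    have hdisjS : ∀ i ∈ S, i ∉ X := by
      intro i hi hiX
      exact (mem_sdiff.mp (hX hiX)).2 hi
    have hprod1 : (∏ i ∈ S, (1 - (if i ∈ X then (1 : ℝ) else 0)) / (1 - p i))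
        = (∏ i ∈ S, (1 - p i))⁻¹ := by
      rw [← Finset.prod_inv_distrib]
      exact Finset.prod_congr rfl (fun i hi => by
        simp [hdisjS i hi, one_div])
    have hSsub : S ⊆ univ \ X := fun i hi => mem_sdiff.mpr ⟨mem_univ i, hdisjS i hi⟩
    have hsplit : (∏ i ∈ univ \ X, (1 - p i))
        = (∏ i ∈ (univ \ X) \ S, (1 - p i)) * ∏ i ∈ S, (1 - p i) :=
      (Finset.prod_sdiff hSsub).symm
    have hset : (univ \ X) \ S = univ \ (S ∪ X) := by
      ext i; simp [mem_sdiff, mem_union]; tauto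
    rw [hprod1, hsplit, hset]
    have hne : (∏ i ∈ S, (1 - p i)) ≠ 0 := Finset.prod_ne_zero_iff.mpr (fun i _ => hp1 i)
    field_simp
end
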